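/- Let K be a finite subset of R^d, g : K → R, x ∈ ri(conv K), y ∈ R, and suppose y < F(x) where F(x) = inf{ z : ∃ H, z + H·(s−x) ≥ g(s) ∀ s ∈ K } and y > G(x) = sup{ z : ∃ H, z + H·(s−x) ≤ g(s) ∀ s ∈ K }. Let Γ_y(x) = cone(conv{ (s − x, y − g(s)) : s ∈ K }) ⊆ R^{d+1}. If 0 ∈ int(Γ_y(x)), then there exists ε > 0 such that for every x̃ with ‖x̃ − x‖ < ε, F(x̃) > y. -/

import Mathlib

/-- One-period superhedging price over the finite scenario set `K`. -/
noncomputable def superPrice14 (d : ℕ) (K : Finset (Fin d → ℝ))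
    (g : (Fin d → ℝ) → ℝ) (x : Fin d → ℝ) : EReal :=
  sInf ((fun z : ℝ => (z : EReal)) ''
    {z : ℝ | ∃ H : Fin d → ℝ, ∀ s ∈ K, g s ≤ z + ∑ i, H i * (s i - x i)})

/-- One-period subhedging price over the finite scenario set `K`. -/
noncomputable def subPrice14 (d : ℕ) (K : Finset (Fin d → ℝ))
    (g : (Fin d → ℝ) → ℝ) (x : Fin d → ℝ) : EReal :=
  sSup ((fun z : ℝ => (z : EReal)) ''
    {z : ℝ | ∃ H : Fin d → ℝ, ∀ s ∈ K, z + ∑ i, H i * (s i - x i) ≤ g s})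

/-- if `G(x) < y < F(x)` with `x ∈ ri(conv K)` and `0` lies in
the interior of the cone `Γ_y(x)` generated by the vectors `(s − x, y − g s)`,
then `F(x̃) > y` for all `x̃` in a neighbourhood of `x`. -/
theorem superPrice_locally_above_level
    (d : ℕ) (K : Finset (Fin d → ℝ)) (g : (Fin d → ℝ) → ℝ)
    (x : Fin d → ℝ)
    (hx : x ∈ intrinsicInterior ℝ (convexHull ℝ (K : Set (Fin d → ℝ))))
    (y : ℝ)
    (hyF : (y : EReal) < superPrice14 d K g x)
    (hyG : subPrice14 d K g x < (y : EReal))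
    (hcone : (0 : (Fin d → ℝ) × ℝ) ∈ interior
        {z : (Fin d → ℝ) × ℝ | ∃ c : ℝ, 0 ≤ c ∧
          ∃ p ∈ convexHull ℝ
              ((fun s : Fin d → ℝ => (s - x, y - g s)) '' (K : Set (Fin d → ℝ))),
            z = c • p}) :
    ∃ ε > (0 : ℝ), ∀ x' : Fin d → ℝ, dist x' x < ε →
      (y : EReal) < superPrice14 d K g x' := by
  classical
  set C : Set ((Fin d → ℝ) × ℝ) := convexHull ℝ
      ((fun s : Fin d → ℝ => (s - x, y - g s)) '' (K : Set (Fin d → ℝ))) with hC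
  -- the full cone is everything
  have hΓ0 : (0 : (Fin d → ℝ) × ℝ) ∈
      {z : (Fin d → ℝ) × ℝ | ∃ c : ℝ, 0 ≤ c ∧ ∃ p ∈ C, z = c • p} :=
    interior_subset hcone
  obtain ⟨r0, hr0, hball0⟩ := Metric.isOpen_iff.mp isOpen_interior _ hcone
  have hΓ : ∀ q : (Fin d → ℝ) × ℝ, ∃ c : ℝ, 0 ≤ c ∧ ∃ p ∈ C, q = c • p := by
    intro q
    rcases eq_or_ne q 0 with rfl | hq
    · exact hΓ0
    · have hqn : 0 < ‖q‖ := norm_pos_iff.mpr hq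
      have h1 : (r0 / (2 * ‖q‖)) • q ∈ Metric.ball (0 : (Fin d → ℝ) × ℝ) r0 := by
        rw [mem_ball_zero_iff, norm_smul, Real.norm_eq_abs, abs_of_pos (by positivity)]
        have : r0 / (2 * ‖q‖) * ‖q‖ = r0 / 2 := by field_simp
        rw [this]; linarith
      have h2 := interior_subset (hball0 h1)
      obtain ⟨c, hc, p, hp, heq⟩ := h2
      have h3 : (2 * ‖q‖ / r0) • ((r0 / (2 * ‖q‖)) • q) = q := by
        rw [smul_smul]
        have h4 : 2 * ‖q‖ / r0 * (r0 / (2 * ‖q‖)) = 1 := by field_simp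
        rw [h4, one_smul]
      rw [heq] at h3
      exact ⟨2 * ‖q‖ / r0 * c, by positivity, p, hp, by rw [← smul_smul]; exact h3.symm⟩
  -- helper: no nonzero functional is ≤ 0 on C
  have key : ∀ f : ((Fin d → ℝ) × ℝ) →L[ℝ] ℝ, (∀ p ∈ C, f p ≤ 0) → f = 0 := by
    intro f hf
    by_contra hne
    obtain ⟨z, hz⟩ : ∃ z, f z ≠ 0 := by
      by_contra h
      push_neg at h
      exact hne (ContinuousLinearMap.ext fun z => by simp [h z])
    obtain ⟨ww, hww⟩ : ∃ ww, 0 < f ww := by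
      rcases hz.lt_or_gt with h | h
      · exact ⟨-z, by simpa using h⟩
      · exact ⟨z, h⟩
    obtain ⟨c, hc, p, hp, heq⟩ := hΓ ww
    rw [heq, map_smul, smul_eq_mul] at hww
    have := mul_nonpos_of_nonneg_of_nonpos hc (hf p hp)
    linarith
  have hCconv : Convex ℝ C := convex_convexHull ℝ _
  have hCcompact : IsCompact C :=
    ((K.finite_toSet).image _).isCompact_convexHull ℝ
  have hCne : C.Nonempty := by
    obtain ⟨c, _, p, hp, _⟩ := hΓ0
    exact ⟨p, hp⟩
  -- 0 belongs to C
  have h0C : (0 : (Fin d → ℝ) × ℝ) ∈ C := by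
    by_contra h0
    obtain ⟨f, u, hfu, hu⟩ :=
      geometric_hahn_banach_closed_point hCconv hCcompact.isClosed h0
    have hu0 : u < 0 := by simpa using hu
    have hf0 : ∀ p ∈ C, f p ≤ 0 := fun p hp => le_of_lt ((hfu p hp).trans hu0)
    have hfz := key f hf0
    obtain ⟨p0, hp0⟩ := hCne
    have := hfu p0 hp0
    rw [hfz] at this
    simp at this
    linarith
  -- C spans everything
  have hspan : Submodule.span ℝ C = ⊤ := by
    rw [Submodule.eq_top_iff']
    intro q
    obtain ⟨c, hc, p, hp, rfl⟩ := hΓ q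
    exact Submodule.smul_mem _ c (Submodule.subset_span hp)
  have haff : affineSpan ℝ C = ⊤ := by
    rw [AffineSubspace.affineSpan_eq_top_iff_vectorSpan_eq_top_of_nonempty ℝ _ _ hCne]
    rw [eq_top_iff, ← hspan]
    refine Submodule.span_le.mpr fun p hp => ?_
    have : p -ᵥ (0 : (Fin d → ℝ) × ℝ) ∈ vectorSpan ℝ C := vsub_mem_vectorSpan ℝ hp h0C
    simpa using this
  have hint : (interior C).Nonempty :=
    hCconv.interior_nonempty_iff_affineSpan_eq_top.mpr haff
  -- 0 is in the interior of C
  have h0int : (0 : (Fin d → ℝ) × ℝ) ∈ interior C := by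
    by_contra h0
    obtain ⟨f, hf⟩ := geometric_hahn_banach_open_point hCconv.interior isOpen_interior h0
    have hf' : ∀ a ∈ interior C, f a < 0 := by
      intro a ha
      have := hf a ha
      simpa using this
    obtain ⟨a0, ha0⟩ := hint
    have hfa0 : f a0 < 0 := hf' a0 ha0
    have hfle : ∀ p ∈ C, f p ≤ 0 := by
      intro p hp
      by_contra hpos
      push_neg at hpos
      have hden : 0 < f p - f a0 := by linarith
      set t : ℝ := f p / (f p - f a0) with ht
      have ht0 : 0 < t := div_pos hpos hden
      have ht1 : (0 : ℝ) ≤ 1 - t := by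
        have : t ≤ 1 := by rw [ht, div_le_one hden]; linarith
        linarith
      have hmem : t • a0 + (1 - t) • p ∈ interior C :=
        hCconv.combo_interior_self_mem_interior ha0 hp ht0 ht1 (by ring)
      have hlt := hf' _ hmem
      rw [map_add, map_smul, map_smul, smul_eq_mul, smul_eq_mul] at hlt
      have hcalc : t * f a0 + (1 - t) * f p = 0 := by
        rw [ht]; field_simp; ring
      linarith
    have hfz := key f hfle
    rw [hfz] at hfa0
    simp at hfa0
  obtain ⟨r, hr, hball⟩ := Metric.isOpen_iff.mp isOpen_interior _ h0int
  have hballC : Metric.ball (0 : (Fin d → ℝ) × ℝ) r ⊆ C := hball.trans interior_subset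
  refine ⟨r / 2, by positivity, ?_⟩
  intro x' hx'
  -- a "martingale measure" with barycenter x' and mean of g at least y + r/2
  have hq : ((x' - x, -(r / 2)) : (Fin d → ℝ) × ℝ) ∈ C := by
    apply hballC
    rw [mem_ball_zero_iff, Prod.norm_def]
    apply max_lt
    · show ‖x' - x‖ < r
      rw [← dist_eq_norm]
      linarith
    · rw [Real.norm_eq_abs, abs_neg, abs_of_pos (by positivity)]
      linarith
  rw [hC, ← Finset.coe_image, Finset.convexHull_eq] at hq
  obtain ⟨w, hw0, hw1, hcm⟩ := hq
  rw [Finset.centerMass_eq_of_sum_1 _ _ hw1] at hcm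
  simp only [id] at hcm
  set T := K.image (fun s : Fin d → ℝ => (s - x, y - g s)) with hT
  have hsnd : ∑ p ∈ T, w p * p.2 = -(r / 2) := by
    have h1 := congrArg Prod.snd hcm
    simpa [Prod.snd_sum, Prod.smul_snd, smul_eq_mul] using h1
  have hfst : ∀ j, ∑ p ∈ T, w p * p.1 j = x' j - x j := by
    intro j
    have h1 := congrArg (fun v : (Fin d → ℝ) × ℝ => v.1 j) hcm
    simpa [Prod.fst_sum, Prod.smul_fst, Finset.sum_apply, Pi.smul_apply,
      smul_eq_mul, Pi.sub_apply] using h1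
  -- every superhedging price at x' is at least y + r/2
  have hub : ∀ z : ℝ, (∃ H : Fin d → ℝ, ∀ s ∈ K, g s ≤ z + ∑ i, H i * (s i - x' i)) →
      y + r / 2 ≤ z := by
    rintro z ⟨H, hH⟩
    set β : ℝ := ∑ j, H j * (x j - x' j) with hβ
    have hpt : ∀ p ∈ T, w p * (y - p.2) ≤ w p * (z + (∑ j, H j * p.1 j) + β) := by
      intro p hp
      apply mul_le_mul_of_nonneg_left _ (hw0 _ hp)
      obtain ⟨s, hs, rfl⟩ := Finset.mem_image.mp hp
      have h1 := hH s hs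
      have h2 : (∑ j, H j * ((s - x) j)) + β =
          ∑ j, H j * (s j - x' j) := by
        rw [hβ, ← Finset.sum_add_distrib]
        refine Finset.sum_congr rfl fun j _ => ?_
        simp only [Pi.sub_apply]
        ring
      simp only [Prod.fst, Prod.snd] at h2 ⊢
      have : y - (y - g s) = g s := by ring
      rw [this]
      linarith [h2 ▸ h1]
    have hsum := Finset.sum_le_sum hpt
    have hL : ∑ p ∈ T, w p * (y - p.2) = y + r / 2 := by
      simp only [mul_sub]
      rw [Finset.sum_sub_distrib, ← Finset.sum_mul, hw1, hsnd]
      ring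
    have hmid : ∑ p ∈ T, w p * (∑ j, H j * p.1 j) = ∑ j, H j * (x' j - x j) := by
      simp only [Finset.mul_sum]
      rw [Finset.sum_comm]
      refine Finset.sum_congr rfl fun j _ => ?_
      rw [← hfst j, Finset.mul_sum]
      refine Finset.sum_congr rfl fun p _ => by ring
    have hR : ∑ p ∈ T, w p * (z + (∑ j, H j * p.1 j) + β) = z := by
      simp only [mul_add]
      rw [Finset.sum_add_distrib, Finset.sum_add_distrib, ← Finset.sum_mul, hw1,
        ← Finset.sum_mul, hw1, hmid]
      have : (∑ j, H j * (x' j - x j)) + β = 0 := by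
        rw [hβ, ← Finset.sum_add_distrib]
        rw [show (0 : ℝ) = ∑ _j : Fin d, 0 by simp]
        refine Finset.sum_congr rfl fun j _ => by ring
      linarith [this]
    rw [hL, hR] at hsum
    exact hsum
  have hle : ((y + r / 2 : ℝ) : EReal) ≤ superPrice14 d K g x' := by
    rw [superPrice14]
    apply le_sInf
    rintro b ⟨z, hz, rfl⟩
    show ((y + r / 2 : ℝ) : EReal) ≤ ((z : ℝ) : EReal)
    exact_mod_cast hub z hz
  refine lt_of_lt_of_le ?_ hle
  exact_mod_cast (by linarith : y < y + r / 2)
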